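/- Let F be a probability distribution on ℝ with right-unbounded support, and let g : ℝ → ℝ be a positive, strictly increasing function with g(x) → ∞ as x → ∞. Then, for any n ∈ ℕ and any k with 1 < k ≤ n, there exist probability distributions H₁, …, Hₙ on ℝ such that for independent random variables ξ₁, …, ξₙ with these respective distributions: (1) for every set of indices 1 ≤ i₁ < i₂ < ⋯ < i_k ≤ n, the distribution F stochastically dominates the distribution of min(ξ_{i₁}, …, ξ_{i_k}); and (2) for every set of indices 1 ≤ i₁ < i₂ < ⋯ < i_{k−1} ≤ n, one has E g(min(ξ_{i₁}, …, ξ_{i_{k−1}})) = ∞. -/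

import Mathlib

open MeasureTheory ProbabilityTheory Filter
open Topology

lemma aux_measurable_inf' {Ω : Type} [MeasurableSpace Ω] {n : ℕ}
    (s : Finset (Fin n)) (hs : s.Nonempty) (f : Fin n → Ω → ℝ) (hf : ∀ i, Measurable (f i)) :
    Measurable fun ω => s.inf' hs fun i => f i ω := by
  apply measurable_of_Iic
  intro x
  have h : (fun ω => s.inf' hs fun i => f i ω) ⁻¹' Set.Iic x
      = ⋃ i ∈ s, (f i) ⁻¹' Set.Iic x := by
    ext ω
    simp [Finset.inf'_le_iff]
  rw [h]
  exact MeasurableSet.biUnion s.countable_toSet (fun i _ => (hf i) measurableSet_Iic)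

lemma aux_cycle (n r : ℕ) (hrn : r < n) :
    ∃ (N : ℕ) (S : ℕ → Finset (Fin n)), 0 < N ∧ (∀ j, (S j).card = r) ∧
      (∀ s : Finset (Fin n), s.card = r → ∀ J : ℕ, ∃ j, J ≤ j ∧ S j = s) ∧
      (∀ (i : Fin n) (j : ℕ), N ≤ j → ∃ m, m ≤ j ∧ j ≤ m + 2 * N ∧ i ∉ S m) := by
  classical
  set 𝒮 : Finset (Finset (Fin n)) := Finset.univ.filter (fun s => s.card = r) with h𝒮
  have hmem : ∀ s : Finset (Fin n), s ∈ 𝒮 ↔ s.card = r := by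
    intro s; simp [h𝒮]
  set L : List (Finset (Fin n)) := 𝒮.toList with hL
  set N : ℕ := L.length with hNdef
  have hne : 𝒮.Nonempty := by
    obtain ⟨t, -, ht⟩ := Finset.exists_subset_card_eq
      (show r ≤ (Finset.univ : Finset (Fin n)).card by
        simp only [Finset.card_univ, Fintype.card_fin]; omega)
    exact ⟨t, (hmem t).2 ht⟩
  have hN : 0 < N := by
    rw [hNdef, hL, Finset.length_toList]
    exact Finset.card_pos.2 hne
  set S : ℕ → Finset (Fin n) := fun j => L.get ⟨j % N, Nat.mod_lt _ hN⟩ with hS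
  have hidx : ∀ s : Finset (Fin n), s ∈ 𝒮 → ∃ m₀ : ℕ, ∃ h : m₀ < N, L.get ⟨m₀, h⟩ = s := by
    intro s hs
    have : s ∈ L := by rw [hL]; exact Finset.mem_toList.2 hs
    obtain ⟨⟨m₀, hm₀⟩, hget⟩ := List.mem_iff_get.1 this
    exact ⟨m₀, hm₀, hget⟩
  have hSval : ∀ (j m₀ : ℕ) (h : m₀ < N), j % N = m₀ → S j = L.get ⟨m₀, h⟩ := by
    intro j m₀ h hj
    subst hj
    rfl
  refine ⟨N, S, hN, ?_, ?_, ?_⟩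
  · intro j
    have h1 : S j ∈ L := by rw [hS]; exact L.get_mem _
    rw [hL, Finset.mem_toList] at h1
    exact (hmem _).1 h1
  · intro s hcard J
    obtain ⟨m₀, hm₀, hget⟩ := hidx s ((hmem s).2 hcard)
    refine ⟨m₀ + N * (J + 1), ?_, ?_⟩
    · have : J + 1 ≤ N * (J + 1) := Nat.le_mul_of_pos_left _ hN
      omega
    · rw [hSval _ m₀ hm₀ (by rw [Nat.add_mul_mod_self_left, Nat.mod_eq_of_lt hm₀]), hget]
  · intro i j hj
    obtain ⟨t, hts, htcard⟩ := Finset.exists_subset_card_eq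
      (show r ≤ (Finset.univ.erase i).card by
        rw [Finset.card_erase_of_mem (Finset.mem_univ i), Finset.card_univ, Fintype.card_fin]
        omega)
    have hit : i ∉ t := fun h => (Finset.mem_erase.1 (hts h)).1 rfl
    obtain ⟨m₀, hm₀, hget⟩ := hidx t ((hmem t).2 htcard)
    have h1 := Nat.div_add_mod (j - m₀) N
    have h2 : (j - m₀) % N < N := Nat.mod_lt _ hN
    set T : ℕ := N * ((j - m₀) / N) with hT
    generalize hr' : (j - m₀) % N = r' at h1 h2
    refine ⟨m₀ + T, by omega, by omega, ?_⟩
    rw [hSval _ m₀ hm₀ (by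
      rw [hT, Nat.add_mul_mod_self_left, Nat.mod_eq_of_lt hm₀]), hget]
    exact hit

/-- **Theorem 2.** Let `F` be a probability distribution on `ℝ` with
right-unbounded support and `g : ℝ → ℝ` a positive, strictly increasing function tending
to `∞`.  For any `n` and any `k` with `1 < k ≤ n` there are distributions `H₁, …, Hₙ`
such that for independent `ξ₁, …, ξₙ` with these distributions: the distribution of the
minimum over any `k` of them is stochastically dominated by `F` (i.e. the CDF of `F` is
pointwise below the CDF of the minimum), while the minimum over any `k - 1` of them has
`E g(min) = ∞`. -/
theorem min_of_many_heavy_light_threshold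
    (F : Measure ℝ) [IsProbabilityMeasure F]
    (hF : ∀ x : ℝ, F (Set.Iic x) < 1)
    (g : ℝ → ℝ) (hg_pos : ∀ x, 0 < g x) (hg_mono : StrictMono g)
    (hg_tendsto : Tendsto g atTop atTop)
    (n k : ℕ) (hk : 1 < k) (hkn : k ≤ n) :
    ∃ H : Fin n → Measure ℝ, (∀ i, IsProbabilityMeasure (H i)) ∧
      ∀ (Ω : Type) (mΩ : MeasurableSpace Ω) (μ : Measure Ω), IsProbabilityMeasure μ →
        ∀ ξ : Fin n → Ω → ℝ, (∀ i, Measurable (ξ i)) → (∀ i, μ.map (ξ i) = H i) →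
          iIndepFun ξ μ →
          ((∀ (s : Finset (Fin n)) (hs : s.Nonempty), s.card = k →
              ∀ x : ℝ,
                F (Set.Iic x) ≤
                  (μ.map fun ω => s.inf' hs fun i => ξ i ω) (Set.Iic x)) ∧
            (∀ (s : Finset (Fin n)) (hs : s.Nonempty), s.card = k - 1 →
              ∫⁻ ω, ENNReal.ofReal (g (s.inf' hs fun i => ξ i ω)) ∂μ = ⊤)) := by
  classical
  obtain ⟨N, S, hN, hScard, hShit, hSavoid⟩ := aux_cycle n (k - 1) (by omega)
  -- basic cdf facts
  have hFc_lt1 : ∀ x : ℝ, cdf F x < 1 := by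
    intro x
    by_contra h
    push_neg at h
    have h2 : (1 : ENNReal) ≤ ENNReal.ofReal (cdf F x) := by
      rw [← ENNReal.ofReal_one]
      exact ENNReal.ofReal_le_ofReal h
    rw [ofReal_cdf] at h2
    exact absurd h2 (not_le.2 (hF x))
  -- the fast-growing sequence a
  have key : ∀ (j : ℕ) (x : ℝ), ∃ y : ℝ, x + 2 < y ∧ (j:ℝ) ≤ g (y-1) * (1 - cdf F x)^n := by
    intro j x
    have hp : (0:ℝ) < (1 - cdf F x)^n := pow_pos (by linarith [hFc_lt1 x]) n
    obtain ⟨z, hz⟩ := tendsto_atTop_atTop.1 hg_tendsto ((j:ℝ) / (1 - cdf F x)^n)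
    refine ⟨max (x + 3) (z + 1), lt_of_lt_of_le (by linarith) (le_max_left _ _), ?_⟩
    have h1 : z ≤ max (x+3) (z+1) - 1 := by
      have := le_max_right (x+3) (z+1); linarith
    have h2 := hz _ h1
    rw [div_le_iff₀ hp] at h2
    exact h2
  choose f hf1 hf2 using key
  set a : ℕ → ℝ := fun j => Nat.rec 0 (fun j x => f j x) j with ha
  have haS : ∀ j, a (j+1) = f j (a j) := fun j => rfl
  have hgap : ∀ j, a j + 2 < a (j+1) := by intro j; rw [haS]; exact hf1 j (a j)
  have hgrow : ∀ j : ℕ, (j:ℝ) ≤ g (a (j+1) - 1) * (1 - cdf F (a j))^n := by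
    intro j; rw [haS]; exact hf2 j (a j)
  have ha_mono : StrictMono a := strictMono_nat_of_lt_succ (fun j => by linarith [hgap j])
  have ha_lb : ∀ j : ℕ, a 0 + 2*(j:ℝ) ≤ a j := by
    intro j
    induction j with
    | zero => simp
    | succ m ih =>
        have := hgap m
        push_cast
        push_cast at ih
        linarith
  have ha_top : Tendsto a atTop atTop := by
    apply tendsto_atTop_mono ha_lb
    apply tendsto_atTop_add_const_left
    exact (tendsto_natCast_atTop_atTop (R := ℝ)).const_mul_atTop two_pos
  have hJex : ∀ x : ℝ, ∃ j, x < a (j+1) := by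
    intro x
    obtain ⟨j, hj⟩ := (ha_top.eventually (eventually_gt_atTop x)).exists
    exact ⟨j, lt_of_lt_of_le hj (ha_mono.monotone (Nat.le_succ j))⟩
  set J : ℝ → ℕ := fun x => Nat.find (hJex x) with hJ
  have hJ1 : ∀ x, x < a (J x + 1) := fun x => Nat.find_spec (hJex x)
  have hJ2 : ∀ x, a 0 ≤ x → a (J x) ≤ x := by
    intro x hx
    by_contra hcon
    push_neg at hcon
    have h0 : J x ≠ 0 := by
      intro h
      rw [h] at hcon
      linarith
    have hmin := Nat.find_min (hJex x) (show J x - 1 < J x by omega)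
    have he : J x - 1 + 1 = J x := by omega
    rw [he] at hmin
    exact hmin hcon
  have hJeq : ∀ (x : ℝ) (j : ℕ), a j ≤ x → x < a (j+1) → J x = j := by
    intro x j h1 h2
    have hle : J x ≤ j := Nat.find_min' (hJex x) h2
    rcases lt_or_eq_of_le hle with hlt | heq
    · exfalso
      have : a (J x + 1) ≤ a j := ha_mono.monotone (show J x + 1 ≤ j by omega)
      linarith [hJ1 x]
    · exact heq
  have hJmono : Monotone J := by
    intro x y hxy
    exact Nat.find_min' (hJex x) (lt_of_le_of_lt hxy (hJ1 y))
  clear_value J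
  -- streak start function
  set σ : Fin n → ℕ → ℕ := fun i j =>
    if i ∈ S (Nat.findGreatest (fun m => i ∉ S m) j)
    then 0 else Nat.findGreatest (fun m => i ∉ S m) j + 1 with hσ
  have hσ_le : ∀ i j, i ∈ S j → σ i j ≤ j := by
    intro i j hij
    rw [hσ]
    dsimp only
    split_ifs with h
    · omega
    · have h1 : Nat.findGreatest (fun m => i ∉ S m) j ≤ j := Nat.findGreatest_le j
      have h2 : Nat.findGreatest (fun m => i ∉ S m) j ≠ j := by
        intro he; rw [he] at h; exact h hij
      omega
  have hσ_mono : ∀ i, Monotone (σ i) := by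
    intro i j j' hjj'
    rw [hσ]
    dsimp only
    split_ifs with h1 h2 h3
    · exact le_rfl
    · exact Nat.zero_le _
    · exact absurd h3 (Nat.findGreatest_spec (P := fun m => i ∉ S m)
        (le_trans (Nat.findGreatest_le j) hjj') h1)
    · exact Nat.succ_le_succ (Nat.findGreatest_mono_right _ hjj')
  have hσ_cross : ∀ (i : Fin n) (j j' : ℕ), j < j' → i ∉ S j → j + 1 ≤ σ i j' := by
    intro i j j' hjj' hij
    have h1 : j ≤ Nat.findGreatest (fun m => i ∉ S m) j' := Nat.le_findGreatest (by omega) hij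
    have h2 : i ∉ S (Nat.findGreatest (fun m => i ∉ S m) j') :=
      Nat.findGreatest_spec (P := fun m => i ∉ S m) (le_of_lt hjj') hij
    rw [hσ]
    dsimp only
    rw [if_neg h2]
    omega
  have hσ_lb : ∀ (i : Fin n) (j : ℕ), N ≤ j → j ≤ σ i j + 2 * N := by
    intro i j hj
    obtain ⟨m, hm1, hm2, hm3⟩ := hSavoid i j hj
    have h1 : m ≤ Nat.findGreatest (fun m => i ∉ S m) j := Nat.le_findGreatest hm1 hm3
    have h2 : i ∉ S (Nat.findGreatest (fun m => i ∉ S m) j) :=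
      Nat.findGreatest_spec (P := fun m => i ∉ S m) hm1 hm3
    rw [hσ]
    dsimp only
    rw [if_neg h2]
    omega
  clear_value σ
  -- the time change ρ
  set ρ : Fin n → ℝ → ℝ := fun i x =>
    if a 0 ≤ x ∧ i ∈ S (J x) then a (σ i (J x)) else x with hρ
  have hρ_low : ∀ (i : Fin n) (x : ℝ), x < a 0 → ρ i x = x := by
    intro i x hx
    rw [hρ]
    dsimp only
    rw [if_neg]
    intro h
    linarith [h.1]
  have hρ_light : ∀ (i : Fin n) (x : ℝ), a 0 ≤ x → i ∉ S (J x) → ρ i x = x := by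
    intro i x h1 h2
    rw [hρ]
    dsimp only
    rw [if_neg]
    exact fun h => h2 h.2
  have hρ_frozen : ∀ (i : Fin n) (x : ℝ), a 0 ≤ x → i ∈ S (J x) → ρ i x = a (σ i (J x)) := by
    intro i x h1 h2
    rw [hρ]
    dsimp only
    rw [if_pos ⟨h1, h2⟩]
  have hρ_le : ∀ (i : Fin n) (x : ℝ), ρ i x ≤ x := by
    intro i x
    rw [hρ]
    dsimp only
    split_ifs with h
    · exact le_trans (ha_mono.monotone (hσ_le i _ h.2)) (hJ2 x h.1)
    · exact le_rfl
  have hρ_mono : ∀ i : Fin n, Monotone (ρ i) := by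
    intro i x y hxy
    by_cases hy : a 0 ≤ y ∧ i ∈ S (J y)
    · rw [hρ_frozen i y hy.1 hy.2]
      by_cases hx : a 0 ≤ x ∧ i ∈ S (J x)
      · rw [hρ_frozen i x hx.1 hx.2]
        exact ha_mono.monotone (hσ_mono i (hJmono hxy))
      · have hρx : ρ i x = x := by rw [hρ]; dsimp only; rw [if_neg hx]
        rw [hρx]
        by_cases hx0 : a 0 ≤ x
        · have hiS : i ∉ S (J x) := fun h => hx ⟨hx0, h⟩
          have hlt : J x < J y := by
            rcases lt_or_eq_of_le (hJmono hxy) with h | h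
            · exact h
            · exfalso; rw [h] at hiS; exact hiS hy.2
          have hcr := hσ_cross i (J x) (J y) hlt hiS
          calc x ≤ a (J x + 1) := le_of_lt (hJ1 x)
          _ ≤ a (σ i (J y)) := ha_mono.monotone hcr
        · push_neg at hx0
          calc x ≤ a 0 := le_of_lt hx0
          _ ≤ a (σ i (J y)) := ha_mono.monotone (Nat.zero_le _)
    · have hρy : ρ i y = y := by rw [hρ]; dsimp only; rw [if_neg hy]
      rw [hρy]
      exact le_trans (hρ_le i x) hxy
  clear_value ρ
  -- local right behaviour of ρ
  have hρ_right : ∀ (i : Fin n) (x : ℝ), ∃ ε > (0:ℝ),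
      (∀ y, x ≤ y → y < x + ε → ρ i y = y) ∨ (∀ y, x ≤ y → y < x + ε → ρ i y = ρ i x) := by
    intro i x
    by_cases hx0 : a 0 ≤ x
    · refine ⟨a (J x + 1) - x, by linarith [hJ1 x], ?_⟩
      have hJy : ∀ y, x ≤ y → y < x + (a (J x + 1) - x) → J y = J x := by
        intro y h1 h2
        exact hJeq y (J x) (le_trans (hJ2 x hx0) h1) (by linarith)
      by_cases hiS : i ∈ S (J x)
      · right
        intro y h1 h2
        rw [hρ_frozen i y (le_trans hx0 h1) (by rw [hJy y h1 h2]; exact hiS), hJy y h1 h2,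
          hρ_frozen i x hx0 hiS]
      · left
        intro y h1 h2
        exact hρ_light i y (le_trans hx0 h1) (by rw [hJy y h1 h2]; exact hiS)
    · push_neg at hx0
      refine ⟨a 0 - x, by linarith, Or.inl ?_⟩
      intro y h1 h2
      exact hρ_low i y (by linarith)
  -- the Stieltjes functions
  have hGmono : ∀ i : Fin n, Monotone (fun x => cdf F (ρ i x)) :=
    fun i => (cdf F).mono.comp (hρ_mono i)
  have hGright : ∀ (i : Fin n) (x : ℝ),
      ContinuousWithinAt (fun y => cdf F (ρ i y)) (Set.Ici x) x := by
    intro i x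
    obtain ⟨ε, hε, hcase⟩ := hρ_right i x
    have hmem : Set.Ici x ∩ Set.Iio (x + ε) ∈ nhdsWithin x (Set.Ici x) :=
      Filter.inter_mem self_mem_nhdsWithin
        (mem_nhdsWithin_of_mem_nhds (Iio_mem_nhds (by linarith)))
    rcases hcase with hid | hconst
    · have heq : (fun y => cdf F (ρ i y)) =ᶠ[nhdsWithin x (Set.Ici x)] (fun y => cdf F y) := by
        filter_upwards [hmem] with y hy
        rw [hid y hy.1 hy.2]
      have hx : ρ i x = x := hid x le_rfl (by linarith)
      exact ((cdf F).right_continuous x).congr_of_eventuallyEq heq (by simp [hx])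
    · have heq : (fun y => cdf F (ρ i y)) =ᶠ[nhdsWithin x (Set.Ici x)]
          (fun _ => cdf F (ρ i x)) := by
        filter_upwards [hmem] with y hy
        rw [hconst y hy.1 hy.2]
      exact continuousWithinAt_const.congr_of_eventuallyEq heq rfl
  set G : Fin n → StieltjesFunction ℝ := fun i =>
    { toFun := fun x => cdf F (ρ i x), mono' := hGmono i, right_continuous' := hGright i }
    with hG
  have hGbot : ∀ i, Tendsto (G i) atBot (𝓝 0) := by
    intro i
    show Tendsto (fun x => cdf F (ρ i x)) atBot (𝓝 0)
    have heq : (fun x => cdf F (ρ i x)) =ᶠ[atBot] (fun x => cdf F x) := by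
      filter_upwards [eventually_lt_atBot (a 0)] with y hy
      rw [hρ_low i y hy]
    exact (tendsto_cdf_atBot F).congr' heq.symm
  have hρtop : ∀ i : Fin n, Tendsto (ρ i) atTop atTop := by
    intro i
    rw [tendsto_atTop_atTop]
    intro b
    obtain ⟨j, hj⟩ := (ha_top.eventually (eventually_ge_atTop b)).exists
    refine ⟨a (j + 3 * N), fun x hx => ?_⟩
    have hJx : j + 3 * N ≤ J x := by
      by_contra hcon
      push_neg at hcon
      have : a (J x + 1) ≤ a (j + 3*N) := ha_mono.monotone (show J x + 1 ≤ j + 3*N by omega)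
      linarith [hJ1 x]
    have hx0 : a 0 ≤ x := le_trans (ha_mono.monotone (Nat.zero_le _)) hx
    by_cases hiS : i ∈ S (J x)
    · rw [hρ_frozen i x hx0 hiS]
      have h1 : N ≤ J x := by omega
      have h2 := hσ_lb i (J x) h1
      have h3 : j ≤ σ i (J x) := by omega
      exact le_trans hj (ha_mono.monotone h3)
    · rw [hρ_light i x hx0 hiS]
      exact le_trans hj (le_trans (ha_mono.monotone (show j ≤ j + 3*N by omega)) hx)
  have hGtop : ∀ i, Tendsto (G i) atTop (𝓝 1) := fun i => (tendsto_cdf_atTop F).comp (hρtop i)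
  have hprob : ∀ i, IsProbabilityMeasure (G i).measure :=
    fun i => (G i).isProbabilityMeasure (hGbot i) (hGtop i)
  refine ⟨fun i => (G i).measure, hprob, ?_⟩
  intro Ω mΩ μ hμ ξ hξm hξmap hξind
  haveI := hμ
  have hIic : ∀ (i : Fin n) (x : ℝ),
      (G i).measure (Set.Iic x) = ENNReal.ofReal (cdf F (ρ i x)) := by
    intro i x
    rw [(G i).measure_Iic (hGbot i), sub_zero]
  have htail : ∀ (i : Fin n) (b : ℝ),
      μ (ξ i ⁻¹' Set.Ioi b) = ENNReal.ofReal (1 - cdf F (ρ i b)) := by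
    intro i b
    have hmap' : μ.map (ξ i) = (G i).measure := hξmap i
    have h1 : μ (ξ i ⁻¹' Set.Ioi b) = (G i).measure (Set.Ioi b) := by
      rw [← hmap', Measure.map_apply (hξm i) measurableSet_Ioi]
    haveI := hprob i
    rw [h1, ← Set.compl_Iic, measure_compl measurableSet_Iic (measure_ne_top _ _),
      measure_univ, hIic]
    rw [ENNReal.ofReal_sub _ (cdf_nonneg F _), ENNReal.ofReal_one]
  have hprod : ∀ (s : Finset (Fin n)) (b : ℝ),
      μ (⋂ i ∈ s, ξ i ⁻¹' Set.Ioi b) = ∏ i ∈ s, ENNReal.ofReal (1 - cdf F (ρ i b)) := by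
    intro s b
    rw [hξind.measure_inter_preimage_eq_mul s (sets := fun _ => Set.Ioi b)
      (fun i _ => measurableSet_Ioi)]
    exact Finset.prod_congr rfl (fun i _ => htail i b)
  have hlight : ∀ (s : Finset (Fin n)), k ≤ s.card → ∀ x : ℝ, ∃ i ∈ s, ρ i x = x := by
    intro s hcard x
    by_cases hx0 : a 0 ≤ x
    · have hnot : ¬ s ⊆ S (J x) := by
        intro hsub
        have h := Finset.card_le_card hsub
        rw [hScard (J x)] at h
        omega
      obtain ⟨i, his, hiS⟩ := Finset.not_subset.1 hnot
      exact ⟨i, his, hρ_light i x hx0 hiS⟩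
    · push_neg at hx0
      obtain ⟨i, hi⟩ := Finset.card_pos.1 (show 0 < s.card by omega)
      exact ⟨i, hi, hρ_low i x hx0⟩
  constructor
  · -- part A : stochastic domination for minima of k
    intro s hs hcard x
    have hmeas : Measurable fun ω => s.inf' hs fun i => ξ i ω := aux_measurable_inf' s hs ξ hξm
    rw [Measure.map_apply hmeas measurableSet_Iic]
    have hset : (fun ω => s.inf' hs fun i => ξ i ω) ⁻¹' Set.Iic x
        = (⋂ i ∈ s, ξ i ⁻¹' Set.Ioi x)ᶜ := by
      ext ω
      simp only [Set.mem_preimage, Set.mem_Iic, Set.mem_compl_iff, Set.mem_iInter,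
        Set.mem_Ioi]
      rw [← Finset.lt_inf'_iff hs, not_lt]
    rw [hset, measure_compl
      (Finset.measurableSet_biInter s (fun i _ => (hξm i) measurableSet_Ioi))
      (measure_ne_top _ _), measure_univ, hprod s x]
    obtain ⟨i₀, hi₀s, hi₀⟩ := hlight s (le_of_eq hcard.symm) x
    have hprod_le : ∏ i ∈ s, ENNReal.ofReal (1 - cdf F (ρ i x))
        ≤ ENNReal.ofReal (1 - cdf F x) := by
      rw [← Finset.mul_prod_erase s _ hi₀s, hi₀]
      calc ENNReal.ofReal (1 - cdf F x) * ∏ i ∈ s.erase i₀, ENNReal.ofReal (1 - cdf F (ρ i x))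
          ≤ ENNReal.ofReal (1 - cdf F x) * 1 := by
            apply mul_le_mul_right
            calc ∏ i ∈ s.erase i₀, ENNReal.ofReal (1 - cdf F (ρ i x))
                ≤ ∏ _i ∈ s.erase i₀, 1 := by
                  apply Finset.prod_le_prod'
                  intro i _
                  rw [← ENNReal.ofReal_one]
                  exact ENNReal.ofReal_le_ofReal (by linarith [cdf_nonneg F (ρ i x)])
            _ = 1 := Finset.prod_const_one
      _ = ENNReal.ofReal (1 - cdf F x) := mul_one _
    have h1 : (1 : ENNReal) - ENNReal.ofReal (1 - cdf F x) = ENNReal.ofReal (cdf F x) := by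
      rw [← ENNReal.ofReal_one, ← ENNReal.ofReal_sub _ (by linarith [cdf_le_one F x])]
      congr 1
      ring
    rw [← ofReal_cdf, ← h1]
    exact tsub_le_tsub_left hprod_le 1
  · -- part B : infinite expectation for minima of k - 1
    intro s hs hcard
    by_contra hfin
    obtain ⟨M, hM⟩ := ENNReal.exists_nat_gt hfin
    obtain ⟨j, hjM, hjS⟩ := hShit s hcard M
    set b : ℝ := a (j+1) - 1 with hb
    have hb1 : a j ≤ b := by have := hgap j; rw [hb]; linarith
    have hb2 : b < a (j+1) := by rw [hb]; linarith
    have hJb : J b = j := hJeq b j hb1 hb2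
    have hb0 : a 0 ≤ b := le_trans (ha_mono.monotone (Nat.zero_le _)) hb1
    have hρb : ∀ i ∈ s, cdf F (ρ i b) ≤ cdf F (a j) := by
      intro i hi
      have hfreeze : ρ i b = a (σ i j) := by
        rw [hρ_frozen i b hb0 (by rw [hJb, hjS]; exact hi), hJb]
      rw [hfreeze]
      exact (cdf F).mono (ha_mono.monotone (hσ_le i j (by rw [hjS]; exact hi)))
    set c : ℝ := 1 - cdf F (a j) with hc
    have hc0 : (0:ℝ) < c := by rw [hc]; linarith [hFc_lt1 (a j)]
    have hc1 : c ≤ 1 := by rw [hc]; linarith [cdf_nonneg F (a j)]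
    set A : Set Ω := ⋂ i ∈ s, ξ i ⁻¹' Set.Ioi b with hA
    have hAmeas : MeasurableSet A :=
      Finset.measurableSet_biInter s (fun i _ => (hξm i) measurableSet_Ioi)
    have hAlb : ENNReal.ofReal c ^ s.card ≤ μ A := by
      rw [hA, hprod s b]
      calc ENNReal.ofReal c ^ s.card = ∏ _i ∈ s, ENNReal.ofReal c := (Finset.prod_const _).symm
      _ ≤ ∏ i ∈ s, ENNReal.ofReal (1 - cdf F (ρ i b)) :=
          Finset.prod_le_prod' (fun i hi => ENNReal.ofReal_le_ofReal (by linarith [hρb i hi]))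
    have hpoint : ∀ ω, A.indicator (fun _ => ENNReal.ofReal (g b)) ω
        ≤ ENNReal.ofReal (g (s.inf' hs fun i => ξ i ω)) := by
      intro ω
      by_cases hω : ω ∈ A
      · rw [Set.indicator_of_mem hω]
        apply ENNReal.ofReal_le_ofReal
        apply hg_mono.monotone
        rw [hA] at hω
        have hgt : ∀ i ∈ s, b < ξ i ω := by
          intro i hi
          exact Set.mem_iInter₂.1 hω i hi
        exact le_of_lt ((Finset.lt_inf'_iff hs).2 hgt)
      · rw [Set.indicator_of_notMem hω]
        exact zero_le
    have hint : ENNReal.ofReal (g b) * μ A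
        ≤ ∫⁻ ω, ENNReal.ofReal (g (s.inf' hs fun i => ξ i ω)) ∂μ := by
      calc ENNReal.ofReal (g b) * μ A
          = ∫⁻ ω, A.indicator (fun _ => ENNReal.ofReal (g b)) ω ∂μ := by
            rw [lintegral_indicator_const hAmeas]
      _ ≤ _ := lintegral_mono hpoint
    have hfinal : (M : ENNReal) ≤ ENNReal.ofReal (g b) * μ A := by
      calc (M : ENNReal) = ENNReal.ofReal (M:ℝ) := (ENNReal.ofReal_natCast M).symm
      _ ≤ ENNReal.ofReal (j:ℝ) := ENNReal.ofReal_le_ofReal (by exact_mod_cast hjM)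
      _ ≤ ENNReal.ofReal (g b * c ^ n) := ENNReal.ofReal_le_ofReal (hgrow j)
      _ ≤ ENNReal.ofReal (g b * c ^ s.card) := by
          apply ENNReal.ofReal_le_ofReal
          apply mul_le_mul_of_nonneg_left _ (le_of_lt (hg_pos b))
          exact pow_le_pow_of_le_one (le_of_lt hc0) hc1 (by omega)
      _ = ENNReal.ofReal (g b) * ENNReal.ofReal (c ^ s.card) :=
          ENNReal.ofReal_mul (le_of_lt (hg_pos b))
      _ = ENNReal.ofReal (g b) * ENNReal.ofReal c ^ s.card := by
          rw [ENNReal.ofReal_pow (le_of_lt hc0)]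
      _ ≤ ENNReal.ofReal (g b) * μ A := mul_le_mul_right hAlb _
    exact absurd hM (not_lt.2 (le_trans hfinal hint))
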